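/- Let m ≥ 1, let p : Fin (m+1) → ℝ^m be affinely independent, and let x lie in the convex hull of {p_0, …, p_m}. With the volume-ratio weights w_j = A(Function.update p j x) / A(p), the point x is reproduced as the convex combination x = ∑_{j=0}^{m} w_j • p_j. -/

import Mathlib

open MeasureTheory Pointwise

/-- The `m`-dimensional volume of the convex hull of the range of a family of points
in `ℝ^m` (the "area" `A(p)` of the simplex with vertices `p`). -/
noncomputable def simVol {m : ℕ} (p : Fin (m + 1) → EuclideanSpace ℝ (Fin m)) : ℝ :=
  (volume (convexHull ℝ (Set.range p))).toReal

/-- The reparameterization underlying the DILOC update (Eq. (18)): a point inside a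
simplex is the convex combination of the vertices weighted by the volume-ratio
barycentric coordinates. -/
theorem point_eq_barycentric_combination {m : ℕ} (hm : 1 ≤ m)
    (p : Fin (m + 1) → EuclideanSpace ℝ (Fin m)) (hp : AffineIndependent ℝ p)
    (x : EuclideanSpace ℝ (Fin m)) (hx : x ∈ convexHull ℝ (Set.range p)) :
    x = ∑ j : Fin (m + 1), (simVol (Function.update p j x) / simVol p) • p j := by
  classical
  have htop : affineSpan ℝ (Set.range p) = ⊤ := by
    rw [hp.affineSpan_eq_top_iff_card_eq_finrank_add_one]
    simp [finrank_euclideanSpace_fin]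
  let b : AffineBasis (Fin (m + 1)) ℝ (EuclideanSpace ℝ (Fin m)) := ⟨p, hp, htop⟩
  have hb : ∀ i, b i = p i := fun _ => rfl
  -- nonnegativity of barycentric coordinates of `x`
  have hw0 : ∀ j, 0 ≤ b.coord j x := by
    intro j
    have hsub : convexHull ℝ (Set.range p) ⊆ (b.coord j) ⁻¹' Set.Ici 0 := by
      apply convexHull_min
      · rintro - ⟨i, rfl⟩
        rcases eq_or_ne j i with rfl | h
        · have : b.coord j (b j) = 1 := b.coord_apply_eq j
          simp only [Set.mem_preimage, Set.mem_Ici, ← hb]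
          rw [this]; norm_num
        · have : b.coord j (b i) = 0 := b.coord_apply_ne h
          simp only [Set.mem_preimage, Set.mem_Ici, ← hb]
          rw [this]
      · exact (convex_Ici (0 : ℝ)).affine_preimage _
    exact hsub hx
  have hVtop : volume (convexHull ℝ (Set.range p)) ≠ ⊤ :=
    (((Set.finite_range p).isCompact_convexHull ℝ).measure_lt_top).ne
  have hVpos : 0 < volume (convexHull ℝ (Set.range p)) := by
    exact Measure.measure_pos_of_nonempty_interior volume ⟨_, b.centroid_mem_interior_convexHull⟩
  -- the key volume identity
  have key : ∀ j, volume (convexHull ℝ (Set.range (Function.update p j x)))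
      = ENNReal.ofReal (b.coord j x) * volume (convexHull ℝ (Set.range p)) := by
    intro j
    set d : EuclideanSpace ℝ (Fin m) := x - p j with hd
    set l : EuclideanSpace ℝ (Fin m) →ₗ[ℝ] ℝ := (b.coord j).linear with hl
    set L : EuclideanSpace ℝ (Fin m) →ₗ[ℝ] EuclideanSpace ℝ (Fin m) :=
      LinearMap.id + l.smulRight d with hL
    have hcoord_add : ∀ v y : EuclideanSpace ℝ (Fin m),
        b.coord j (v + y) = l v + b.coord j y := by
      intro v y
      have h2 := (b.coord j).map_vadd y v
      rw [vadd_eq_add, vadd_eq_add] at h2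
      exact h2
    let T : EuclideanSpace ℝ (Fin m) →ᵃ[ℝ] EuclideanSpace ℝ (Fin m) :=
      { toFun := fun y => y + b.coord j y • d
        linear := L
        map_vadd' := by
          intro y v
          simp only [vadd_eq_add, hL, LinearMap.add_apply, LinearMap.id_apply,
            LinearMap.smulRight_apply, hcoord_add, add_smul]
          module }
    have hTapp : ∀ y, T y = y + b.coord j y • d := fun _ => rfl
    have hTp : ⇑T ∘ p = Function.update p j x := by
      funext i
      rcases eq_or_ne i j with rfl | h
      · have h1 : b.coord i (p i) = 1 := by rw [← hb]; exact b.coord_apply_eq i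
        simp [hTapp, h1, hd, Function.update_self]
      · have h0 : b.coord j (p i) = 0 := by rw [← hb]; exact b.coord_apply_ne h.symm
        simp [hTapp, h0, Function.update_of_ne h]
    haveI : Nontrivial (Fin (m + 1)) := by
      refine ⟨⟨0, 1, ?_⟩⟩
      rw [Fin.ne_iff_vne]
      simp [Fin.val_one', Nat.mod_eq_of_lt (by omega : 1 < m + 1)]
    set c := b.basisOf j with hc
    have hlc : ∀ i : {i : Fin (m + 1) // i ≠ j}, l (c i) = -1 := by
      intro i
      rw [hc, b.basisOf_apply]
      have h2 := (b.coord j).linearMap_vsub (b i) (b j)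
      rw [hl, h2, vsub_eq_sub, b.coord_apply_eq, b.coord_apply_ne (Ne.symm i.2)]
      norm_num
    have hLc : ∀ i : {i : Fin (m + 1) // i ≠ j}, L (c i) = c i - d := by
      intro i
      have h3 : L (c i) = c i + l (c i) • d := by
        simp [hL, LinearMap.smulRight_apply]
      rw [h3, hlc i]
      module
    have hdet : LinearMap.det L = b.coord j x := by
      rw [← LinearMap.det_toMatrix c]
      have hM : LinearMap.toMatrix c c L
          = 1 + Matrix.replicateCol Unit (fun k => -(c.repr d k)) * Matrix.replicateRow Unit (fun _ => (1 : ℝ)) := by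
        ext k i
        rw [LinearMap.toMatrix_apply, hLc]
        rcases eq_or_ne k i with rfl | hki
        · simp [Matrix.mul_apply, Matrix.one_apply_eq, map_sub, Module.Basis.repr_self, sub_eq_add_neg]
        · simp [Matrix.mul_apply, Matrix.one_apply_ne hki, map_sub, Module.Basis.repr_self,
            Finsupp.single_apply, Ne.symm hki, sub_eq_add_neg]
      rw [hM, Matrix.det_one_add_replicateCol_mul_replicateRow]
      have hx0 : b.coord j x = 1 - ∑ k, c.repr d k := by
        have h4 : b.coord j x = 1 - (b.basisOf j).sumCoords (x -ᵥ b j) := rfl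
        rw [h4, ← hc, Module.Basis.coe_sumCoords_of_fintype]
        simp [Module.Basis.coord_apply, hd, hb, vsub_eq_sub]
      rw [hx0, dotProduct]
      simp only [one_mul]
      rw [Finset.sum_neg_distrib]
      ring
    -- image of the hull under `T`
    have himg : convexHull ℝ (Set.range (Function.update p j x))
        = ⇑T '' convexHull ℝ (Set.range p) := by
      rw [AffineMap.image_convexHull, ← Set.range_comp, hTp]
    have hc0 : ∀ y, T y = (b.coord j 0 • d) +ᵥ L y := by
      intro y
      have h5 : b.coord j y = l y + b.coord j 0 := by
        have := hcoord_add y 0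
        simpa using this
      rw [hTapp, h5, vadd_eq_add]
      have h6 : L y = y + l y • d := by simp [hL]
      rw [h6, add_smul]
      module
    have himg2 : ⇑T '' convexHull ℝ (Set.range p)
        = (b.coord j 0 • d) +ᵥ (⇑L '' convexHull ℝ (Set.range p)) := by
      rw [← Set.image_vadd, ← Set.image_comp]
      exact Set.image_congr fun y _ => hc0 y
    rw [himg, himg2, measure_vadd, Measure.addHaar_image_linearMap, hdet,
      abs_of_nonneg (hw0 j)]
  -- conclude
  have hterm : ∀ j, simVol (Function.update p j x) / simVol p = b.coord j x := by
    intro j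
    rw [simVol, simVol, key j, ENNReal.toReal_mul, ENNReal.toReal_ofReal (hw0 j)]
    rw [mul_div_assoc, div_self, mul_one]
    exact ENNReal.toReal_ne_zero.2 ⟨hVpos.ne', hVtop⟩
  calc x = ∑ i, b.coord i x • b i := (b.linear_combination_coord_eq_self x).symm
    _ = ∑ j : Fin (m + 1), (simVol (Function.update p j x) / simVol p) • p j :=
      Finset.sum_congr rfl fun j _ => by rw [hterm j, hb]
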